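/- For every prime p, letting G = (ℤ/pℤ)³, there exists a saturated transfer system ℛ on G such that no U ∈ 𝒰_G satisfies Tr(U) = ℛ. Explicitly, fixing a subgroup H ≤ G of order p² and letting ℛ be the relation with (W',W) ∈ ℛ iff W' ≤ W and (W' = W or W ≤ H), ℛ is a saturated transfer system and there is no U ∈ 𝒰_G with Tr(U) = ℛ. -/

import Mathlib

open scoped Classical

/-- The character group of `G`: monoid homomorphisms to `ℂˣ`. -/
abbrev CharGp (G : Type*) [Group G] := G →* ℂˣ

/-- Complex conjugation acting on characters: `χ ↦ χ̄`. -/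
noncomputable def charConj {G : Type*} [Group G] (χ : CharGp G) : CharGp G :=
  (Units.map (starRingEnd ℂ).toMonoidHom).comp χ

/-- Restriction of characters along an inclusion of subgroups: `R_K^H` on elements. -/
def resChar {G : Type*} [Group G] {K H : Subgroup G} (h : K ≤ H) (χ : CharGp H) : CharGp K :=
  χ.comp (Subgroup.inclusion h)

/-- Restriction of a character of `G` itself to a subgroup. -/
def resCharTop {G : Type*} [Group G] (K : Subgroup G) (χ : CharGp G) : CharGp K :=
  χ.comp K.subtype

/-- A transfer system on a finite group `G`: a partial order on subgroups refining
inclusion, closed under conjugation and under intersection-pullback. -/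
structure TransferSystem (G : Type*) [Group G] where
  rel : Subgroup G → Subgroup G → Prop
  le_of_rel : ∀ {K H : Subgroup G}, rel K H → K ≤ H
  refl : ∀ H : Subgroup G, rel H H
  trans : ∀ {K L H : Subgroup G}, rel K L → rel L H → rel K H
  conj : ∀ {K H : Subgroup G} (g : G), rel K H →
    rel (K.map (MulAut.conj g).toMonoidHom) (H.map (MulAut.conj g).toMonoidHom)
  inf_rel : ∀ {K H : Subgroup G} (L : Subgroup G), rel K H → L ≤ H → rel (K ⊓ L) L

/-- A transfer system is saturated if `(K,H) ∈ ℛ` and `K ≤ L ≤ H` imply `(L,H) ∈ ℛ`. -/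
def TransferSystem.Saturated {G : Type*} [Group G] (R : TransferSystem G) : Prop :=
  ∀ ⦃K L H : Subgroup G⦄, R.rel K H → K ≤ L → L ≤ H → R.rel L H

/-- A subgroup `H` is `ℛ`-cofibrant if there is no proper `K < H` with `(K,H) ∈ ℛ`. -/
def TransferSystem.Cofibrant {G : Type*} [Group G] (R : TransferSystem G)
    (H : Subgroup G) : Prop :=
  ¬ ∃ K : Subgroup G, K < H ∧ R.rel K H

/-- `𝒰_G`: subsets of `Ĝ` containing the trivial character and closed under conjugation. -/
def UnivSet (G : Type*) [Group G] : Set (Set (CharGp G)) :=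
  {U | (1 : CharGp G) ∈ U ∧ ∀ χ ∈ U, charConj χ ∈ U}

/-- `Tr(U)`: the relation `{(K,H) : K ≤ H and I_K^H(R_K^G(U)) ⊆ R_H^G(U)}`. -/
def TrRel {G : Type*} [Group G] (U : Set (CharGp G)) (K H : Subgroup G) : Prop :=
  ∃ h : K ≤ H, resChar h ⁻¹' (resCharTop K '' U) ⊆ resCharTop H '' U

namespace RankThreeAux

abbrev Vp (p : ℕ) := ZMod p × ZMod p × ZMod p

def dotp {p : ℕ} (a b : Vp p) : ZMod p := a.1 * b.1 + a.2.1 * b.2.1 + a.2.2 * b.2.2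

lemma dotp_add_right {p : ℕ} (a u v : Vp p) : dotp a (u + v) = dotp a u + dotp a v := by
  simp only [dotp, Prod.fst_add, Prod.snd_add]; ring

lemma dotp_add_left {p : ℕ} (a b v : Vp p) : dotp (a + b) v = dotp a v + dotp b v := by
  simp only [dotp, Prod.fst_add, Prod.snd_add]; ring

lemma dotp_comm {p : ℕ} (a b : Vp p) : dotp a b = dotp b a := by
  simp only [dotp]; ring

lemma dotp_smul_left {p : ℕ} (t : ZMod p) (a v : Vp p) : dotp (t • a) v = t * dotp a v := by
  simp only [dotp, Prod.smul_fst, Prod.smul_snd, smul_eq_mul]; ring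

lemma dotp_zero_left {p : ℕ} (v : Vp p) : dotp 0 v = 0 := by
  simp [dotp]

lemma dotp_sub_left {p : ℕ} (a b v : Vp p) : dotp (a - b) v = dotp a v - dotp b v := by
  simp only [dotp, Prod.fst_sub, Prod.snd_sub]; ring

lemma dotp_faithful {p : ℕ} (d : Vp p) (h : ∀ u, dotp d u = 0) : d = 0 := by
  have h1 := h (1, 0, 0); have h2 := h (0, 1, 0); have h3 := h (0, 0, 1)
  simp only [dotp, mul_one, mul_zero, add_zero, zero_add] at h1 h2 h3
  exact Prod.ext h1 (Prod.ext h2 h3)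

/-- standard primitive p-th root of unity, as a unit. -/
noncomputable def zC (p : ℕ) : ℂˣ :=
  Units.mk0 (Complex.exp (2 * Real.pi * Complex.I / p)) (Complex.exp_ne_zero _)

lemma zC_prim (p : ℕ) [NeZero p] : IsPrimitiveRoot ((zC p : ℂˣ) : ℂ) p :=
  Complex.isPrimitiveRoot_exp p (NeZero.ne p)

lemma zC_pow_p (p : ℕ) [NeZero p] : zC p ^ p = 1 := by
  ext
  push_cast
  exact (zC_prim p).pow_eq_one

lemma zC_pow_mod (p : ℕ) [NeZero p] (m : ℕ) : zC p ^ m = zC p ^ (m % p) := by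
  conv_lhs => rw [← Nat.div_add_mod m p]
  rw [pow_add, pow_mul, zC_pow_p, one_pow, one_mul]

/-- the character `t ↦ ζ^t` of `ZMod p`, valued in units. -/
noncomputable def eKu (p : ℕ) (t : ZMod p) : ℂˣ := zC p ^ t.val

lemma eKu_add (p : ℕ) [NeZero p] (s t : ZMod p) : eKu p (s + t) = eKu p s * eKu p t := by
  unfold eKu
  rw [ZMod.val_add, ← zC_pow_mod, pow_add]

lemma eKu_natCast (p : ℕ) [NeZero p] (m : ℕ) : eKu p (m : ZMod p) = zC p ^ m := by
  unfold eKu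
  rw [ZMod.val_natCast, ← zC_pow_mod]

lemma eKu_inj (p : ℕ) [NeZero p] {s t : ZMod p} (h : eKu p s = eKu p t) : s = t := by
  have : ((zC p : ℂˣ) : ℂ) ^ s.val = ((zC p : ℂˣ) : ℂ) ^ t.val := by
    have := congrArg (Units.val) h
    simpa [eKu] using this
  have := (zC_prim p).pow_inj (ZMod.val_lt s) (ZMod.val_lt t) this
  have h2 := congrArg (fun m : ℕ => (m : ZMod p)) this
  simpa [ZMod.natCast_rightInverse s, ZMod.natCast_rightInverse t] using h2

/-- The character of `(ℤ/p)³` attached to a vector `a`. -/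
noncomputable def chi (p : ℕ) [NeZero p] (a : Vp p) : Multiplicative (Vp p) →* ℂˣ :=
  MonoidHom.mk' (fun x => eKu p (dotp a x.toAdd))
    (by
      intro x y
      show eKu p (dotp a (Multiplicative.toAdd (x*y))) = _
      rw [← eKu_add]
      congr 1
      have : Multiplicative.toAdd (x * y) = Multiplicative.toAdd x + Multiplicative.toAdd y := rfl
      rw [this, dotp_add_right])

lemma chi_apply (p : ℕ) [NeZero p] (a : Vp p) (x : Multiplicative (Vp p)) :
    chi p a x = eKu p (dotp a x.toAdd) := rfl

-- every element of Multiplicative (Vp p) has p-th power 1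
lemma pow_p_eq_one (p : ℕ) [NeZero p] (x : Multiplicative (Vp p)) : x ^ p = 1 := by
  have : Multiplicative.toAdd (x ^ p) = p • Multiplicative.toAdd x := rfl
  apply Multiplicative.toAdd.injective
  rw [this]
  obtain ⟨v1, v2, v3⟩ := Multiplicative.toAdd x
  show p • ((v1, v2, v3) : Vp p) = (0 : Vp p)
  simp [Prod.smul_def, nsmul_eq_mul, ZMod.natCast_self]

lemma decompose (p : ℕ) [NeZero p] (x : Multiplicative (Vp p)) :
    x = (Multiplicative.ofAdd ((1,0,0) : Vp p)) ^ (Multiplicative.toAdd x).1.val *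
        (Multiplicative.ofAdd ((0,1,0) : Vp p)) ^ (Multiplicative.toAdd x).2.1.val *
        (Multiplicative.ofAdd ((0,0,1) : Vp p)) ^ (Multiplicative.toAdd x).2.2.val := by
  apply Multiplicative.toAdd.injective
  have hc : ∀ v : ZMod p, (v.val : ZMod p) = v := fun v => ZMod.natCast_rightInverse v
  simp only [toAdd_mul, toAdd_pow, toAdd_ofAdd]
  obtain ⟨v1, v2, v3⟩ := Multiplicative.toAdd x
  simp [Prod.ext_iff, Prod.smul_def, nsmul_eq_mul, hc]

lemma chi_classify (p : ℕ) [NeZero p] (χ : Multiplicative (Vp p) →* ℂˣ) :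
    ∃ a : Vp p, χ = chi p a := by
  have hpow : ∀ x : Multiplicative (Vp p), ((χ x : ℂˣ) : ℂ) ^ p = 1 := by
    intro x
    rw [← Units.val_pow_eq_pow_val, ← map_pow, pow_p_eq_one, map_one, Units.val_one]
  obtain ⟨k1, hk1lt, hk1⟩ := (zC_prim p).eq_pow_of_pow_eq_one (hpow (Multiplicative.ofAdd (1,0,0)))
  obtain ⟨k2, hk2lt, hk2⟩ := (zC_prim p).eq_pow_of_pow_eq_one (hpow (Multiplicative.ofAdd (0,1,0)))
  obtain ⟨k3, hk3lt, hk3⟩ := (zC_prim p).eq_pow_of_pow_eq_one (hpow (Multiplicative.ofAdd (0,0,1)))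
  refine ⟨((k1 : ZMod p), (k2 : ZMod p), (k3 : ZMod p)), ?_⟩
  refine MonoidHom.ext (fun x => Units.ext ?_)
  rw [chi_apply]
  have hc : ∀ v : ZMod p, (v.val : ZMod p) = v := fun v => ZMod.natCast_rightInverse v
  have hu1 : χ (Multiplicative.ofAdd ((1,0,0) : Vp p)) = zC p ^ k1 :=
    Units.ext (by rw [Units.val_pow_eq_pow_val, hk1])
  have hu2 : χ (Multiplicative.ofAdd ((0,1,0) : Vp p)) = zC p ^ k2 :=
    Units.ext (by rw [Units.val_pow_eq_pow_val, hk2])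
  have hu3 : χ (Multiplicative.ofAdd ((0,0,1) : Vp p)) = zC p ^ k3 :=
    Units.ext (by rw [Units.val_pow_eq_pow_val, hk3])
  have hd : dotp (((k1 : ZMod p), (k2 : ZMod p), (k3 : ZMod p)) : Vp p) (Multiplicative.toAdd x)
      = ((k1 * (Multiplicative.toAdd x).1.val + k2 * (Multiplicative.toAdd x).2.1.val
          + k3 * (Multiplicative.toAdd x).2.2.val : ℕ) : ZMod p) := by
    push_cast
    simp [dotp, hc]
  rw [hd, eKu_natCast]
  conv_lhs => rw [decompose p x]
  rw [map_mul, map_mul, map_pow, map_pow, map_pow, hu1, hu2, hu3,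
    ← pow_mul, ← pow_mul, ← pow_mul, ← pow_add, ← pow_add]

/-- characters of a cyclic subgroup are determined by the value on the generator -/
lemma char_ext_zpowers {G : Type*} [Group G] (w : G)
    (χ₁ χ₂ : (Subgroup.zpowers w) →* ℂˣ)
    (h : χ₁ ⟨w, Subgroup.mem_zpowers w⟩ = χ₂ ⟨w, Subgroup.mem_zpowers w⟩) : χ₁ = χ₂ := by
  ext x
  obtain ⟨x, hx⟩ := x
  obtain ⟨k, rfl⟩ := Subgroup.mem_zpowers_iff.mp hx
  have hval : (⟨w ^ k, hx⟩ : Subgroup.zpowers w) = (⟨w, Subgroup.mem_zpowers w⟩ : Subgroup.zpowers w) ^ k := by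
    apply Subtype.ext
    simp
  rw [hval, map_zpow, map_zpow, h]

lemma bot_char_subsingleton {G : Type*} [Group G] :
    Subsingleton ((⊥ : Subgroup G) →* ℂˣ) := by
  constructor
  intro f g
  ext x
  obtain ⟨x, hx⟩ := x
  have : x = 1 := Subgroup.mem_bot.mp hx
  subst this
  have h1 : (⟨(1 : G), hx⟩ : (⊥ : Subgroup G)) = 1 := rfl
  rw [h1, map_one, map_one]

-- complex-valued additive character
noncomputable def eC (p : ℕ) (t : ZMod p) : ℂ := ((eKu p t : ℂˣ) : ℂ)

lemma eC_add (p : ℕ) [NeZero p] (s t : ZMod p) : eC p (s + t) = eC p s * eC p t := by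
  unfold eC; rw [eKu_add]; rfl

lemma eC_zero (p : ℕ) [NeZero p] : eC p 0 = 1 := by
  unfold eC eKu
  rw [ZMod.val_zero, pow_zero, Units.val_one]

lemma abs_zC (p : ℕ) : ‖((zC p : ℂˣ) : ℂ)‖ = 1 := by
  have : ((zC p : ℂˣ) : ℂ) = Complex.exp (((2 * Real.pi / p : ℝ) : ℂ) * Complex.I) := by
    show Complex.exp _ = _
    congr 1
    push_cast
    ring
  rw [this, Complex.norm_exp_ofReal_mul_I]

lemma abs_eC (p : ℕ) (t : ZMod p) : ‖eC p t‖ = 1 := by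
  unfold eC eKu
  rw [Units.val_pow_eq_pow_val, norm_pow, abs_zC, one_pow]

lemma eC_ne_zero (p : ℕ) (t : ZMod p) : eC p t ≠ 0 := by
  intro h
  have := abs_eC p t
  rw [h] at this
  simp at this

lemma conj_eC (p : ℕ) [NeZero p] (t : ZMod p) :
    (starRingEnd ℂ) (eC p t) = eC p (-t) := by
  have h1 : eC p t * eC p (-t) = 1 := by
    rw [← eC_add, add_neg_cancel, eC_zero]
  have h2 : eC p t * (starRingEnd ℂ) (eC p t) = 1 := by
    rw [Complex.mul_conj]
    norm_cast
    rw [← Complex.sq_norm, abs_eC, one_pow]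
  exact (mul_left_cancel₀ (eC_ne_zero p t) (h2.trans h1.symm))

lemma eC_ne_one (p : ℕ) [NeZero p] {t : ZMod p} (ht : t ≠ 0) : eC p t ≠ 1 := by
  unfold eC eKu
  rw [Units.val_pow_eq_pow_val]
  exact (zC_prim p).pow_ne_one_of_pos_of_lt (ZMod.val_pos.mpr ht).ne' (ZMod.val_lt t)

/-- translation-invariance trick: sum of a nontrivial character over a "subgroup" is 0 -/
lemma sum_shift_eq_zero {M : Type*} [AddCommGroup M] [DecidableEq M] [Fintype M] (T : Finset M)
    (g : M → ℂ) (hg : ∀ x y, g (x + y) = g x * g y) (ψ₀ : M)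
    (hmem : ∀ x, x ∈ T ↔ x + ψ₀ ∈ T) (hψ : g ψ₀ ≠ 1) :
    ∑ x ∈ T, g x = 0 := by
  have h1 : ∑ x ∈ T, g x = ∑ x ∈ T, g (x + ψ₀) := by
    refine Finset.sum_nbij' (fun x => x - ψ₀) (fun x => x + ψ₀) ?_ ?_ ?_ ?_ ?_
    · intro a ha
      have := (hmem (a - ψ₀)).mpr
      simp only [sub_add_cancel] at this
      exact this ha
    · intro a ha
      exact (hmem a).mp ha
    · intro a _; simp
    · intro a _; simp
    · intro a _; simp
  have h2 : ∑ x ∈ T, g (x + ψ₀) = (∑ x ∈ T, g x) * g ψ₀ := by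
    rw [Finset.sum_mul]
    exact Finset.sum_congr rfl (fun x _ => hg x ψ₀)
  have h3 : (∑ x ∈ T, g x) * (g ψ₀ - 1) = 0 := by
    rw [mul_sub, mul_one, ← h2, ← h1, sub_self]
  rcases mul_eq_zero.mp h3 with h | h
  · exact h
  · exact absurd (sub_eq_zero.mp h) hψ

/-- applying an additive hom to `c.val • v` multiplies by `c`. -/
lemma map_val_smul {p : ℕ} [NeZero p] (g : Vp p →+ ZMod p) (c : ZMod p) (v : Vp p) :
    g (c.val • v) = c * g v := by
  rw [map_nsmul, nsmul_eq_mul, ZMod.natCast_rightInverse c]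

/-- a `ZMod p`-scalar multiple as a natural multiple. -/
lemma smul_eq_val_smul {p : ℕ} [NeZero p] (c : ZMod p) (v : Vp p) : c • v = c.val • v := by
  obtain ⟨v1, v2, v3⟩ := v
  have hc : (c.val : ZMod p) = c := ZMod.natCast_rightInverse c
  simp [Prod.smul_def, Prod.ext_iff, nsmul_eq_mul, hc]

lemma card_V (p : ℕ) [NeZero p] : Fintype.card (Vp p) = p ^ 3 := by
  simp [ZMod.card]
  ring

/-- fibers of a surjective additive functional on `(ℤ/p)³` have `p²` elements. -/
lemma card_ker (p : ℕ) [Fact p.Prime] (g : Vp p →+ ZMod p) (z : Vp p) (hz : g z = 1) :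
    (Finset.univ.filter fun v : Vp p => g v = 0).card = p ^ 2 := by
  have hfib : ∀ c : ZMod p,
      (Finset.univ.filter fun v : Vp p => g v = c).card
        = (Finset.univ.filter fun v : Vp p => g v = 0).card := by
    intro c
    refine Finset.card_bij' (fun v _ => v - c.val • z) (fun v _ => v + c.val • z) ?_ ?_ ?_ ?_
    · intro a ha
      simp only [Finset.mem_filter, Finset.mem_univ, true_and] at ha ⊢
      rw [map_sub, map_val_smul g c z, hz, mul_one, ha, sub_self]
    · intro a ha
      simp only [Finset.mem_filter, Finset.mem_univ, true_and] at ha ⊢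
      rw [map_add, map_val_smul g c z, hz, mul_one, ha, zero_add]
    · intro a _; simp
    · intro a _; simp
  have hcount := Finset.card_eq_sum_card_fiberwise
    (f := fun v : Vp p => g v) (s := Finset.univ) (t := Finset.univ)
    (fun x _ => Finset.mem_univ _)
  rw [Finset.card_univ, card_V p] at hcount
  have : ∑ c : ZMod p, (Finset.univ.filter fun v : Vp p => g v = c).card
      = ∑ _c : ZMod p, (Finset.univ.filter fun v : Vp p => g v = 0).card :=
    Finset.sum_congr rfl (fun c _ => hfib c)
  rw [this, Finset.sum_const, Finset.card_univ, ZMod.card, smul_eq_mul] at hcount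
  have hp : p ≠ 0 := (Fact.out : p.Prime).ne_zero
  have := Nat.eq_of_mul_eq_mul_left (Nat.pos_of_ne_zero hp)
    (hcount.symm.trans (by ring : p ^ 3 = p * p ^ 2))
  exact this

/-- a functional vanishing on the kernel of a surjective functional is a multiple of it. -/
lemma hom_factor {p : ℕ} [NeZero p] (g h : Vp p →+ ZMod p) (z : Vp p) (hz : g z = 1)
    (hk : ∀ v, g v = 0 → h v = 0) : ∀ v, h v = h z * g v := by
  intro v
  have h0 : g (v - (g v).val • z) = 0 := by
    rw [map_sub, map_val_smul g (g v) z, hz, mul_one, sub_self]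
  have := hk _ h0
  rw [map_sub, map_val_smul h (g v) z] at this
  have := sub_eq_zero.mp this
  rw [this]; ring


lemma fourier_core (p : ℕ) [Fact p.Prime] (l w0 : Vp p) (hw : dotp l w0 = 1)
    (f : Vp p → ZMod p)
    (hcon : ∀ ψ : Vp p, dotp l ψ = 0 → ∃ c, ∀ q : Vp p, dotp q w0 = 0 → f q + dotp q ψ ≠ c) :
    False := by
  haveI : NeZero p := ⟨(Fact.out : p.Prime).ne_zero⟩
  classical
  set Qf : Finset (Vp p) := Finset.univ.filter (fun q => dotp q w0 = 0) with hQf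
  set Tf : Finset (Vp p) := Finset.univ.filter (fun u => dotp l u = 0) with hTf
  have hQmem : ∀ q : Vp p, q ∈ Qf ↔ dotp q w0 = 0 := by
    intro q; simp [hQf]
  have hTmem : ∀ u : Vp p, u ∈ Tf ↔ dotp l u = 0 := by
    intro u; simp [hTf]
  have hQcard : Qf.card = p ^ 2 :=
    card_ker p (AddMonoidHom.mk' (fun v => dotp v w0) (fun a b => dotp_add_left a b w0)) l hw
  have hTcard : Tf.card = p ^ 2 :=
    card_ker p (AddMonoidHom.mk' (fun v => dotp l v) (fun a b => dotp_add_right l a b)) w0 hw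
  have hsep : ∀ d : Vp p, dotp d w0 = 0 → (∀ u ∈ Tf, dotp d u = 0) → d = 0 := by
    intro d hdw hdu
    have hfac := hom_factor (AddMonoidHom.mk' (fun v => dotp l v) (fun a b => dotp_add_right l a b))
      (AddMonoidHom.mk' (fun v => dotp d v) (fun a b => dotp_add_right d a b)) w0 hw
      (fun v hv => hdu v ((hTmem v).mpr hv))
    apply dotp_faithful
    intro u
    have := hfac u
    simp only [AddMonoidHom.mk'_apply] at this
    rw [this, hdw, zero_mul]
  have KsumZero : ∀ m : ZMod p, m ≠ 0 → ∑ j : ZMod p, eC p (j * m) = 0 := by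
    intro m hm
    refine sum_shift_eq_zero Finset.univ (fun j => eC p (j * m))
      (fun x y => by show eC p ((x + y) * m) = eC p (x * m) * eC p (y * m)
                     rw [add_mul, eC_add]) m⁻¹ (fun x => by simp) ?_
    show eC p (m⁻¹ * m) ≠ 1
    rw [inv_mul_cancel₀ hm]
    exact eC_ne_one p one_ne_zero
  set Tsum : ZMod p → Vp p → ℂ := fun j ψ => ∑ q ∈ Qf, eC p (j * (f q + dotp q ψ)) with hTsum
  -- Claim 1
  have claim1 : ∀ ψ ∈ Tf, (p : ℝ) ^ 2 ≤ ∑ j ∈ Finset.univ.erase (0 : ZMod p),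
      ‖Tsum j ψ‖ := by
    intro ψ hψ
    obtain ⟨c, hc⟩ := hcon ψ ((hTmem ψ).mp hψ)
    have hZ : ∑ j : ZMod p, ∑ q ∈ Qf, eC p (j * (f q + dotp q ψ - c)) = 0 := by
      rw [Finset.sum_comm]
      refine Finset.sum_eq_zero (fun q hq => ?_)
      exact KsumZero _ (sub_ne_zero.mpr (hc q ((hQmem q).mp hq)))
    have hzterm : ∑ q ∈ Qf, eC p ((0 : ZMod p) * (f q + dotp q ψ - c)) = ((p : ℂ)) ^ 2 := by
      have : ∀ q ∈ Qf, eC p ((0 : ZMod p) * (f q + dotp q ψ - c)) = 1 := by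
        intro q _; rw [zero_mul, eC_zero]
      rw [Finset.sum_congr rfl this, Finset.sum_const, hQcard]
      push_cast; ring
    have hsplit := Finset.sum_erase_add Finset.univ
      (fun j : ZMod p => ∑ q ∈ Qf, eC p (j * (f q + dotp q ψ - c))) (Finset.mem_univ (0 : ZMod p))
    rw [hZ, hzterm] at hsplit
    have hE : ∑ j ∈ Finset.univ.erase (0 : ZMod p), ∑ q ∈ Qf, eC p (j * (f q + dotp q ψ - c))
        = -((p : ℂ)) ^ 2 := by linear_combination hsplit
    have habs : (p : ℝ) ^ 2
        = ‖∑ j ∈ Finset.univ.erase (0 : ZMod p), ∑ q ∈ Qf,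
            eC p (j * (f q + dotp q ψ - c))‖ := by
      rw [hE]
      rw [norm_neg]
      rw [norm_pow]
      simp
    rw [habs]
    refine le_trans (norm_sum_le _ _) ?_
    refine Finset.sum_le_sum (fun j _ => ?_)
    have hfact : ∑ q ∈ Qf, eC p (j * (f q + dotp q ψ - c)) = eC p (j * (-c)) * Tsum j ψ := by
      rw [hTsum]
      simp only
      rw [Finset.mul_sum]
      refine Finset.sum_congr rfl (fun q _ => ?_)
      rw [← eC_add]
      congr 1
      ring
    rw [hfact, norm_mul, abs_eC, one_mul]
  -- Claim 2
  have claim2 : ∀ j : ZMod p, j ≠ 0 → ∑ ψ ∈ Tf, (‖Tsum j ψ‖) ^ 2 = (p : ℝ) ^ 4 := by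
    intro j hj
    have horth : ∀ q q' : Vp p, q ∈ Qf → q' ∈ Qf → q ≠ q' →
        ∑ ψ ∈ Tf, eC p (j * dotp (q - q') ψ) = 0 := by
      intro q q' hq hq' hne
      by_cases hall : ∀ u ∈ Tf, dotp (q - q') u = 0
      · refine absurd (hsep (q - q') ?_ hall) (sub_ne_zero.mpr hne)
        rw [dotp_sub_left, (hQmem q).mp hq, (hQmem q').mp hq', sub_self]
      · push_neg at hall
        obtain ⟨ψ₀, hψ₀T, hψ₀⟩ := hall
        refine sum_shift_eq_zero Tf (fun u => eC p (j * dotp (q - q') u))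
          (fun x y => by
            show eC p (j * dotp (q - q') (x + y)) = _ * _
            rw [dotp_add_right, mul_add, eC_add]) ψ₀ ?_ ?_
        · intro x
          simp only [hTmem, dotp_add_right, (hTmem ψ₀).mp hψ₀T, add_zero]
        · show eC p (j * dotp (q - q') ψ₀) ≠ 1
          exact eC_ne_one p (mul_ne_zero hj hψ₀)
    have hC : ∑ ψ ∈ Tf, Tsum j ψ * (starRingEnd ℂ) (Tsum j ψ) = ((p : ℂ)) ^ 4 := by
      have hconj : ∀ ψ : Vp p, (starRingEnd ℂ) (Tsum j ψ)
          = ∑ q' ∈ Qf, eC p (-(j * (f q' + dotp q' ψ))) := by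
        intro ψ
        rw [hTsum]
        simp only
        rw [map_sum]
        exact Finset.sum_congr rfl (fun q' _ => conj_eC p _)
      have hprod : ∀ ψ : Vp p, Tsum j ψ * (starRingEnd ℂ) (Tsum j ψ)
          = ∑ q ∈ Qf, ∑ q' ∈ Qf, eC p (j * (f q - f q') + j * dotp (q - q') ψ) := by
        intro ψ
        rw [hconj ψ, hTsum]
        simp only
        rw [Finset.sum_mul_sum]
        refine Finset.sum_congr rfl (fun q _ => Finset.sum_congr rfl (fun q' _ => ?_))
        rw [← eC_add]
        congr 1
        rw [dotp_sub_left]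
        ring
      calc ∑ ψ ∈ Tf, Tsum j ψ * (starRingEnd ℂ) (Tsum j ψ)
          = ∑ ψ ∈ Tf, ∑ q ∈ Qf, ∑ q' ∈ Qf, eC p (j * (f q - f q') + j * dotp (q - q') ψ) :=
            Finset.sum_congr rfl (fun ψ _ => hprod ψ)
        _ = ∑ q ∈ Qf, ∑ ψ ∈ Tf, ∑ q' ∈ Qf, eC p (j * (f q - f q') + j * dotp (q - q') ψ) :=
            Finset.sum_comm
        _ = ∑ q ∈ Qf, ∑ q' ∈ Qf, ∑ ψ ∈ Tf, eC p (j * (f q - f q') + j * dotp (q - q') ψ) :=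
            Finset.sum_congr rfl (fun q _ => Finset.sum_comm)
        _ = ∑ q ∈ Qf, ∑ q' ∈ Qf, eC p (j * (f q - f q')) * ∑ ψ ∈ Tf, eC p (j * dotp (q - q') ψ) := by
            refine Finset.sum_congr rfl (fun q _ => Finset.sum_congr rfl (fun q' _ => ?_))
            rw [Finset.mul_sum]
            exact Finset.sum_congr rfl (fun ψ _ => by rw [← eC_add])
        _ = ∑ q ∈ Qf, ((p : ℂ)) ^ 2 := by
            refine Finset.sum_congr rfl (fun q hq => ?_)
            rw [Finset.sum_eq_single_of_mem q hq
              (fun q' hq' hne => by rw [horth q q' hq hq' (Ne.symm hne), mul_zero])]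
            have h1 : q - q = (0 : Vp p) := sub_self q
            have h2 : f q - f q = (0 : ZMod p) := sub_self _
            rw [h1, h2, mul_zero, eC_zero, one_mul]
            have : ∀ ψ ∈ Tf, eC p (j * dotp ((0 : Vp p)) ψ) = 1 := by
              intro ψ _
              rw [dotp_zero_left, mul_zero, eC_zero]
            rw [Finset.sum_congr rfl this, Finset.sum_const, hTcard]
            push_cast; ring
        _ = ((p : ℂ)) ^ 4 := by
            rw [Finset.sum_const, hQcard]
            push_cast; ring
    have hir : ∀ ψ : Vp p, Tsum j ψ * (starRingEnd ℂ) (Tsum j ψ)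
        = (((‖Tsum j ψ‖) ^ 2 : ℝ) : ℂ) := by
      intro ψ
      rw [Complex.mul_conj, Complex.sq_norm]
    rw [Finset.sum_congr rfl (fun ψ _ => hir ψ)] at hC
    rw [← Complex.ofReal_sum] at hC
    have hq4 : ((p : ℂ)) ^ 4 = (((p : ℝ) ^ 4 : ℝ) : ℂ) := by push_cast; ring
    rw [hq4] at hC
    exact Complex.ofReal_injective hC
  -- Claim 3 : Cauchy-Schwarz
  have claim3 : ∀ j : ZMod p, j ≠ 0 → ∑ ψ ∈ Tf, ‖Tsum j ψ‖ ≤ (p : ℝ) ^ 3 := by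
    intro j hj
    have hcs := sq_sum_le_card_mul_sum_sq (s := Tf) (f := fun ψ => ‖Tsum j ψ‖)
    rw [claim2 j hj, hTcard] at hcs
    have hc2 : ((p ^ 2 : ℕ) : ℝ) * (p : ℝ) ^ 4 = ((p : ℝ) ^ 3) ^ 2 := by push_cast; ring
    rw [hc2] at hcs
    have hnn : (0 : ℝ) ≤ ∑ ψ ∈ Tf, ‖Tsum j ψ‖ :=
      Finset.sum_nonneg (fun ψ _ => norm_nonneg _)
    have hp3 : (0 : ℝ) ≤ (p : ℝ) ^ 3 := by positivity
    nlinarith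
  -- put it together
  have hp2 : (2 : ℝ) ≤ (p : ℝ) := by
    have := (Fact.out : p.Prime).two_le
    exact_mod_cast this
  have low : (p : ℝ) ^ 4 ≤ ∑ ψ ∈ Tf, ∑ j ∈ Finset.univ.erase (0 : ZMod p),
      ‖Tsum j ψ‖ := by
    have := Finset.sum_le_sum claim1
    rw [Finset.sum_const, hTcard] at this
    refine le_trans (le_of_eq ?_) this
    push_cast; ring
  rw [Finset.sum_comm] at low
  have upp : ∑ j ∈ Finset.univ.erase (0 : ZMod p), ∑ ψ ∈ Tf, ‖Tsum j ψ‖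
      ≤ (((Finset.univ.erase (0 : ZMod p)).card : ℝ)) * (p : ℝ) ^ 3 := by
    refine le_trans (Finset.sum_le_sum (fun j hj =>
      claim3 j (Finset.ne_of_mem_erase hj))) ?_
    rw [Finset.sum_const, nsmul_eq_mul]
  have hcard : (Finset.univ.erase (0 : ZMod p)).card = p - 1 := by
    rw [Finset.card_erase_of_mem (Finset.mem_univ _), Finset.card_univ, ZMod.card]
  rw [hcard] at upp
  have hlt : ((p - 1 : ℕ) : ℝ) * (p : ℝ) ^ 3 < (p : ℝ) ^ 4 := by
    have h1 : ((p - 1 : ℕ) : ℝ) = (p : ℝ) - 1 := by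
      have : 1 ≤ p := (Fact.out : p.Prime).one_lt.le
      push_cast [Nat.cast_sub this]
      ring
    rw [h1]
    nlinarith [pow_pos (show (0:ℝ) < (p:ℝ) by linarith) 3]
  linarith

lemma exists_functional (p : ℕ) [Fact p.Prime] (H : Subgroup (Multiplicative (Vp p)))
    (hH : Nat.card H = p ^ 2) :
    ∃ φ : Vp p →+ ZMod p,
      (∀ v : Vp p, Multiplicative.ofAdd v ∈ H ↔ φ v = 0) ∧ (∃ z, φ z = 1) := by
  haveI : NeZero p := ⟨(Fact.out : p.Prime).ne_zero⟩
  have hppos : 0 < p := (Fact.out : p.Prime).pos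
  have hcardG : Nat.card (Multiplicative (Vp p)) = p ^ 3 := by
    rw [Nat.card_congr (Multiplicative.toAdd (α := Vp p)), Nat.card_prod, Nat.card_prod,
      Nat.card_zmod]
    ring
  have hQcard : Nat.card (Multiplicative (Vp p) ⧸ H) = p := by
    have hmul := Subgroup.card_eq_card_quotient_mul_card_subgroup H
    rw [hcardG, hH] at hmul
    have hpos : 0 < p ^ 2 := pow_pos hppos 2
    refine Nat.eq_of_mul_eq_mul_right hpos ?_
    rw [← hmul]; ring
  haveI := isCyclic_of_prime_card hQcard
  obtain ⟨g₀, hg₀⟩ := IsCyclic.exists_generator (α := Multiplicative (Vp p) ⧸ H)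
  have hg₀p : g₀ ^ p = 1 := by
    have := pow_card_eq_one' (x := g₀)
    rwa [hQcard] at this
  set f₀ : ℤ →+ Additive (Multiplicative (Vp p) ⧸ H) :=
    zmultiplesHom _ (Additive.ofMul g₀) with hf₀def
  have hf₀ : f₀ (p : ℤ) = 0 := by
    show ((p : ℤ) • Additive.ofMul g₀) = 0
    rw [← ofMul_zpow, zpow_natCast, hg₀p, ofMul_one]
  set ψZ : ZMod p →+ Additive (Multiplicative (Vp p) ⧸ H) := ZMod.lift p ⟨f₀, hf₀⟩ with hψZ
  have hψZcoe : ∀ k : ℤ, ψZ (k : ZMod p) = Additive.ofMul (g₀ ^ k) := by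
    intro k
    rw [hψZ, ZMod.lift_coe]
    show (k • Additive.ofMul g₀) = _
    rw [← ofMul_zpow]
  have hsurj : Function.Surjective ψZ := by
    intro x
    obtain ⟨k, hk⟩ := Subgroup.mem_zpowers_iff.mp (hg₀ (Additive.toMul x))
    exact ⟨(k : ZMod p), by rw [hψZcoe k, hk]; rfl⟩
  have hbij : Function.Bijective ψZ := by
    refine (Nat.bijective_iff_surjective_and_card ψZ).mpr ⟨hsurj, ?_⟩
    have hAQ : Nat.card (Additive (Multiplicative (Vp p) ⧸ H)) = p := by
      rw [Nat.card_congr (Additive.toMul (α := Multiplicative (Vp p) ⧸ H))]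
      exact hQcard
    rw [Nat.card_zmod, hAQ]
  set E : ZMod p ≃+ Additive (Multiplicative (Vp p) ⧸ H) := AddEquiv.ofBijective ψZ hbij
    with hE
  refine ⟨AddMonoidHom.mk' (fun v =>
      E.symm (Additive.ofMul (QuotientGroup.mk (Multiplicative.ofAdd v)))) ?_, ?_, ?_⟩
  · intro a b
    have hmk : (QuotientGroup.mk (Multiplicative.ofAdd (a + b)) : Multiplicative (Vp p) ⧸ H)
        = QuotientGroup.mk (Multiplicative.ofAdd a) * QuotientGroup.mk (Multiplicative.ofAdd b) := by
      rw [← QuotientGroup.mk_mul]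
      rfl
    show E.symm (Additive.ofMul (QuotientGroup.mk (Multiplicative.ofAdd (a + b)))) = _
    rw [hmk, ofMul_mul, map_add]
  · intro v
    simp only [AddMonoidHom.mk'_apply]
    rw [AddEquiv.map_eq_zero_iff, ofMul_eq_zero, QuotientGroup.eq_one_iff]
  · obtain ⟨x, hx⟩ := QuotientGroup.mk_surjective (Additive.toMul (E 1))
    refine ⟨Multiplicative.toAdd x, ?_⟩
    simp only [AddMonoidHom.mk'_apply]
    have h1 : Multiplicative.ofAdd (Multiplicative.toAdd x) = x := rfl
    rw [h1, hx]
    show E.symm (E 1) = 1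
    simp

end RankThreeAux

open RankThreeAux in
/-- **Theorem (failure of the saturation conjecture in rank three).**
For every prime `p`, with `G = (ℤ/pℤ)³` and `H ≤ G` any subgroup of order `p²`,
the relation `(W',W) ∈ ℛ ↔ W' ≤ W ∧ (W' = W ∨ W ≤ H)` is a saturated transfer
system on `G` that is not realized by any `U ∈ 𝒰_G`. -/
theorem rank_three_unrealized (p : ℕ) (hp : p.Prime)
    (H : Subgroup (Multiplicative (ZMod p × ZMod p × ZMod p)))
    (hH : Nat.card H = p ^ 2) :
    ∃ R : TransferSystem (Multiplicative (ZMod p × ZMod p × ZMod p)),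
      (∀ W' W, R.rel W' W ↔ (W' ≤ W ∧ (W' = W ∨ W ≤ H))) ∧
      R.Saturated ∧
      ¬ ∃ U ∈ UnivSet (Multiplicative (ZMod p × ZMod p × ZMod p)),
          ∀ K K', R.rel K K' ↔ TrRel U K K' := by
  haveI : Fact p.Prime := ⟨hp⟩
  haveI : NeZero p := ⟨hp.ne_zero⟩
  have hmap : ∀ (W : Subgroup (Multiplicative (ZMod p × ZMod p × ZMod p)))
      (g : Multiplicative (ZMod p × ZMod p × ZMod p)),
      W.map (MulAut.conj g).toMonoidHom = W := by
    intro W g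
    have hid : ∀ y : Multiplicative (ZMod p × ZMod p × ZMod p),
        (MulAut.conj g).toMonoidHom y = y := by
      intro y
      show g * y * g⁻¹ = y
      exact mul_inv_cancel_comm g y
    ext x
    simp only [Subgroup.mem_map]
    constructor
    · rintro ⟨y, hy, rfl⟩
      rw [hid y]; exact hy
    · intro hx
      exact ⟨x, hx, hid x⟩
  refine ⟨⟨fun W' W => W' ≤ W ∧ (W' = W ∨ W ≤ H), fun h => h.1,
      fun W => ⟨le_refl W, Or.inl rfl⟩, ?_, ?_, ?_⟩, fun _ _ => Iff.rfl, ?_, ?_⟩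
  · -- trans
    rintro K L M ⟨hKL, hd1⟩ ⟨hLM, hd2⟩
    refine ⟨le_trans hKL hLM, ?_⟩
    rcases hd1 with rfl | h1
    · exact hd2
    · rcases hd2 with rfl | h2
      · exact Or.inr h1
      · exact Or.inr h2
  · -- conj
    rintro K M g ⟨hKM, hd⟩
    rw [hmap K g, hmap M g]
    exact ⟨hKM, hd⟩
  · -- inf_rel
    rintro K M L ⟨hKM, hd⟩ hLM
    refine ⟨inf_le_right, ?_⟩
    rcases hd with rfl | h
    · left
      exact inf_of_le_right hLM
    · exact Or.inr (le_trans hLM h)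
  · -- saturated
    rintro K L M ⟨hKM, hd⟩ hKL hLM
    refine ⟨hLM, ?_⟩
    rcases hd with rfl | h
    · exact Or.inl (le_antisymm hLM hKL)
    · exact Or.inr h
  · -- non-realization
    rintro ⟨U, hU, hTr⟩
    have h1U : (1 : CharGp (Multiplicative (ZMod p × ZMod p × ZMod p))) ∈ U := hU.1
    obtain ⟨φ, hφker, z, hφz⟩ := exists_functional p H hH
    set l : Vp p := (φ (1,0,0), φ (0,1,0), φ (0,0,1)) with hl
    have hφdot : ∀ v : Vp p, φ v = dotp l v := by
      intro v
      obtain ⟨v1, v2, v3⟩ := v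
      have hc : ∀ c : ZMod p, (c.val : ZMod p) = c := fun c => ZMod.natCast_rightInverse c
      have hv : ((v1,v2,v3) : Vp p)
          = v1.val • ((1,0,0) : Vp p) + v2.val • ((0,1,0) : Vp p) + v3.val • ((0,0,1) : Vp p) := by
        simp [Prod.ext_iff, Prod.smul_def, nsmul_eq_mul, hc]
      conv_lhs => rw [hv]
      rw [map_add, map_add, map_val_smul φ, map_val_smul φ, map_val_smul φ]
      simp only [dotp, hl]
      ring
    haveI hSub := bot_char_subsingleton (G := Multiplicative (ZMod p × ZMod p × ZMod p))
    -- (P) : restriction to H is surjective on characters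
    have hPH : ∀ ψ : CharGp H, ∃ χ ∈ U, resCharTop H χ = ψ := by
      intro ψ
      obtain ⟨hle, hsub⟩ := (hTr ⊥ H).mp ⟨bot_le, Or.inr le_rfl⟩
      have hmem : ψ ∈ resChar hle ⁻¹' (resCharTop ⊥ '' U) := by
        refine Set.mem_preimage.mpr ⟨1, h1U, ?_⟩
        exact Subsingleton.elim _ _
      exact hsub hmem
    -- (N) : for w outside H, some character value is omitted by U
    have hNW : ∀ w : ZMod p × ZMod p × ZMod p, φ w ≠ 0 →
        ∃ c : ZMod p, ∀ χ ∈ U, χ (Multiplicative.ofAdd w) ≠ eKu p c := by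
      intro w hw
      set W := Subgroup.zpowers (Multiplicative.ofAdd w) with hW
      have hnotrel : ¬ ((⊥ : Subgroup (Multiplicative (ZMod p × ZMod p × ZMod p))) ≤ W ∧
          ((⊥ : Subgroup (Multiplicative (ZMod p × ZMod p × ZMod p))) = W ∨ W ≤ H)) := by
        rintro ⟨-, h | h⟩
        · have hmem : Multiplicative.ofAdd w ∈ (⊥ : Subgroup (Multiplicative (ZMod p × ZMod p × ZMod p))) := by
            rw [h]; exact Subgroup.mem_zpowers _
          have h1 := Subgroup.mem_bot.mp hmem
          apply hw
          have hw0 : w = 0 := by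
            have := congrArg Multiplicative.toAdd h1
            exact this
          rw [hw0, map_zero]
        · exact hw ((hφker w).mp (h (Subgroup.mem_zpowers _)))
      have hnotTr : ¬ TrRel U ⊥ W := fun hh => hnotrel ((hTr ⊥ W).mpr hh)
      rw [TrRel] at hnotTr
      push_neg at hnotTr
      obtain ⟨ψ, hψpre, hψnot⟩ := Set.not_subset.mp (hnotTr bot_le)
      have hxp : ((ψ ⟨Multiplicative.ofAdd w, Subgroup.mem_zpowers _⟩ : ℂˣ) : ℂ) ^ p = 1 := by
        rw [← Units.val_pow_eq_pow_val, ← map_pow]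
        have hsub1 : (⟨Multiplicative.ofAdd w, Subgroup.mem_zpowers _⟩ : W) ^ p = 1 := by
          apply Subtype.ext
          show (Multiplicative.ofAdd w) ^ p = 1
          exact pow_p_eq_one p _
        rw [hsub1, map_one, Units.val_one]
      obtain ⟨k, hklt, hk⟩ := (zC_prim p).eq_pow_of_pow_eq_one hxp
      refine ⟨(k : ZMod p), ?_⟩
      intro χ hχU hval
      apply hψnot
      refine ⟨χ, hχU, ?_⟩
      apply char_ext_zpowers
      show χ (Multiplicative.ofAdd w) = _
      rw [hval]
      apply Units.ext
      rw [eKu_natCast, Units.val_pow_eq_pow_val, hk]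
    -- choice of preferred preimages
    have hChoice : ∀ q : ZMod p × ZMod p × ZMod p,
        ∃ a : Vp p, chi p a ∈ U ∧ ∃ t : ZMod p, a = q + t • l := by
      intro q
      obtain ⟨χ, hχU, hχres⟩ := hPH (resCharTop H (chi p q))
      obtain ⟨a, rfl⟩ := chi_classify p χ
      refine ⟨a, hχU, ?_⟩
      have hann : ∀ v : Vp p, φ v = 0 → dotp (a - q) v = 0 := by
        intro v hv
        have hvH : Multiplicative.ofAdd v ∈ H := (hφker v).mpr hv
        have heq := DFunLike.congr_fun hχres (⟨Multiplicative.ofAdd v, hvH⟩ : H)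
        have heq2 : eKu p (dotp a v) = eKu p (dotp q v) := heq
        have := eKu_inj p heq2
        rw [dotp_sub_left, this, sub_self]
      have hfac := hom_factor φ
        (AddMonoidHom.mk' (fun v => dotp (a - q) v) (fun x y => dotp_add_right _ x y)) z hφz
        (fun v hv => hann v hv)
      refine ⟨dotp (a - q) z, ?_⟩
      have hdiff : a - q = (dotp (a - q) z) • l := by
        have hd : ∀ u, dotp (a - q) u = dotp ((dotp (a - q) z) • l) u := by
          intro u
          rw [dotp_smul_left]
          have h3 := hfac u
          simp only [AddMonoidHom.mk'_apply] at h3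
          rw [h3, hφdot u]
        have h4 := dotp_faithful ((a - q) - (dotp (a - q) z) • l)
          (fun u => by rw [dotp_sub_left, hd u, sub_self])
        exact sub_eq_zero.mp h4
      rw [← hdiff]
      abel
    choose A hAU hAt using hChoice
    -- the contradiction
    refine fourier_core p l z (by rw [← hφdot, hφz]) (fun q => dotp (A q) z) ?_
    intro ψ hψ
    have hφw : φ (z + ψ) ≠ 0 := by
      rw [hφdot, dotp_add_right, ← hφdot z, ← hφdot ψ, hφz]
      rw [hφdot ψ, hψ, add_zero]
      exact one_ne_zero
    obtain ⟨c, hc⟩ := hNW (z + ψ) hφw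
    refine ⟨c, ?_⟩
    intro q hq heq
    apply hc (chi p (A q)) (hAU q)
    rw [chi_apply]
    have htoAdd : Multiplicative.toAdd (Multiplicative.ofAdd (z + ψ)) = z + ψ := rfl
    rw [htoAdd]
    congr 1
    obtain ⟨t, hAq⟩ := hAt q
    have h2 : dotp (A q) ψ = dotp q ψ := by
      rw [hAq, dotp_add_left, dotp_smul_left, hψ, mul_zero, add_zero]
    rw [dotp_add_right, h2]
    exact heq
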